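/- Let G ≥ 1 be an integer. The map (n,k) ↦ T_G(n,k) = (k + ⌊(k−1)/G⌋)/(G+1)^n is injective on the set of index pairs {(n,k) : n ≥ 1, 1 ≤ k ≤ G·(G+1)^(n−1)}; that is, distinct inserted points of the fractal construction receive distinct topological orders, so the topological order sorts the points of the fractal curve unambiguously. -/

import Mathlib

/-- If `f2` is not divisible by `G+1` and `n1 < n2`, the cross-multiplied
equality cannot hold. -/
lemma topOrder_aux (G n1 n2 f1 f2 : ℕ) (hlt : n1 < n2)
    (hnd : ¬ (G + 1) ∣ f2)
    (h : f1 * (G + 1) ^ n2 = f2 * (G + 1) ^ n1) : False := by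
  have hpow : 0 < (G + 1) ^ n1 := Nat.pow_pos (Nat.succ_pos G)
  have h2 : f1 * (G + 1) ^ (n2 - n1) * (G + 1) ^ n1 = f2 * (G + 1) ^ n1 := by
    rw [mul_assoc, ← pow_add, Nat.sub_add_cancel hlt.le]
    exact h
  have h3 : f1 * (G + 1) ^ (n2 - n1) = f2 := Nat.eq_of_mul_eq_mul_right hpow h2
  apply hnd
  have hd : n2 - n1 ≠ 0 := by omega
  refine ⟨f1 * (G + 1) ^ (n2 - n1 - 1), ?_⟩
  have he : n2 - n1 - 1 + 1 = n2 - n1 := by omega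
  rw [← h3]
  conv_lhs => rw [← he]
  rw [pow_succ]; ring

/-- The topological order `T_G(n,k) = (k + ⌊(k−1)/G⌋)/(G+1)^n` is injective on
the set of index pairs `{(n,k) : n ≥ 1, 1 ≤ k ≤ G·(G+1)^(n−1)}`: distinct
inserted points of the fractal construction receive distinct topological
orders. -/
theorem topOrder_injective (G : ℕ) (hG : 1 ≤ G) :
    Set.InjOn
      (fun p : ℕ × ℕ =>
        ((p.2 + (p.2 - 1) / G : ℕ) : ℚ) / ((G : ℚ) + 1) ^ p.1)
      {p : ℕ × ℕ | 1 ≤ p.1 ∧ 1 ≤ p.2 ∧ p.2 ≤ G * (G + 1) ^ (p.1 - 1)} := by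
  have hmod : ∀ k : ℕ, 1 ≤ k → ¬ (G + 1) ∣ (k + (k - 1) / G) := by
    intro k hk hdvd
    obtain ⟨q, r, hr, hmk⟩ : ∃ q r, r < G ∧ k - 1 = G * q + r :=
      ⟨(k - 1) / G, (k - 1) % G, Nat.mod_lt _ hG, (Nat.div_add_mod (k - 1) G).symm⟩
    have hq : (k - 1) / G = q := by
      rw [hmk, Nat.mul_add_div (by omega), Nat.div_eq_of_lt hr]; omega
    have hke : k + (k - 1) / G = q * (G + 1) + (r + 1) := by
      rw [hq, Nat.mul_add, Nat.mul_one, Nat.mul_comm q G]; omega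
    rw [hke] at hdvd
    have h1 : (G + 1) ∣ (r + 1) :=
      (Nat.dvd_add_right ⟨q, by ring⟩).mp hdvd
    have := Nat.le_of_dvd (Nat.succ_pos r) h1
    omega
  have hmono : ∀ k1 k2 : ℕ, k1 < k2 → k1 + (k1 - 1) / G < k2 + (k2 - 1) / G := by
    intro k1 k2 h
    have := Nat.div_le_div_right (c := G) (Nat.sub_le_sub_right h.le 1)
    omega
  rintro ⟨n1, k1⟩ ⟨h1n, h1k, -⟩ ⟨n2, k2⟩ ⟨h2n, h2k, -⟩ heq
  simp only at heq
  have hQpos : (0 : ℚ) < (G : ℚ) + 1 := by positivity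
  have keyQ : ((k1 + (k1 - 1) / G : ℕ) : ℚ) * ((G : ℚ) + 1) ^ n2
      = ((k2 + (k2 - 1) / G : ℕ) : ℚ) * ((G : ℚ) + 1) ^ n1 := by
    rw [div_eq_div_iff (by positivity) (by positivity)] at heq
    exact heq
  have keyN : (k1 + (k1 - 1) / G) * (G + 1) ^ n2
      = (k2 + (k2 - 1) / G) * (G + 1) ^ n1 := by
    have hc : ((G : ℚ) + 1) = ((G + 1 : ℕ) : ℚ) := by push_cast; ring
    rw [hc] at keyQ
    exact_mod_cast keyQ
  have hn : n1 = n2 := by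
    rcases lt_trichotomy n1 n2 with h | h | h
    · exact absurd (topOrder_aux G n1 n2 _ _ h (hmod k2 h2k) keyN) id
    · exact h
    · exact absurd (topOrder_aux G n2 n1 _ _ h (hmod k1 h1k) keyN.symm) id
  subst hn
  have hpow : 0 < (G + 1) ^ n1 := Nat.pow_pos (Nat.succ_pos G)
  have hf : k1 + (k1 - 1) / G = k2 + (k2 - 1) / G :=
    Nat.eq_of_mul_eq_mul_right hpow keyN
  have hk : k1 = k2 := by
    rcases lt_trichotomy k1 k2 with h | h | h
    · exact absurd hf (hmono k1 k2 h).ne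
    · exact h
    · exact absurd hf.symm (hmono k2 k1 h).ne
  simp [hk]
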